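/- Let w, n ≥ 1 be integers and define Δ_{s} = -(u₁u₂)^{-s}Σ_{i=0}^{s-1}u₁^{i}u₂^{s-1-i} for 1 ≤ s ≤ n-1, Δ_0 = 0, F_w = Σ_{i=0}^{w-1}(u₁u₂)^i, F_{-1} = -(u₁u₂)^{-1}. Then Δ_n := ((u₁-1)(u₂-1)F_w + 1)·Δ_{n-1} + (u₁u₂)^{-1}·(F_w/F_{-1})·(Δ_{n-1} - Δ_{n-2}) equals Σ_{0≤i≤w-1, 0≤j≤n-1} u₁^{i+j+1-n} u₂^{i-j} − Σ_{0≤i≤w, 0≤j≤n-2} u₁^{i+j+1-n} u₂^{i-j-1}. -/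

import Mathlib

open Finset

noncomputable section

/-- Laurent polynomials in two variables `u₁, u₂` over `ℤ`. -/
abbrev L2 := AddMonoidAlgebra ℤ (ℤ × ℤ)

/-- The monomial `u₁^r * u₂^s`. -/
def mono (r s : ℤ) : L2 := AddMonoidAlgebra.single (r, s) 1

/-- The `i`-th diagonal part `P^[i]`: the sum of all monomials `a·u₁^r·u₂^s` of `P`
with `r - s = i`. -/
def diag (P : L2) (i : ℤ) : L2 :=
  AddMonoidAlgebra.ofCoeff (Finsupp.filter (fun p : ℤ × ℤ => p.1 - p.2 = i) P.coeff)

/-- `F r = Σ_{i=0}^{r-1} (u₁u₂)^i` for `r > 0`, `F 0 = 0`,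
`F r = -Σ_{i=r}^{-1} (u₁u₂)^i` for `r < 0`. -/
def F (r : ℤ) : L2 :=
  if 0 < r then ∑ i ∈ range r.toNat, mono i i
  else -∑ i ∈ range (-r).toNat, mono (-(i : ℤ) - 1) (-(i : ℤ) - 1)

/-- The closed form `Δ_s = -(u₁u₂)^{-s} Σ_{i=0}^{s-1} u₁^i u₂^{s-1-i}` (with `Δ_0 = 0`). -/
def Dl (s : ℕ) : L2 :=
  -(mono (-(s : ℤ)) (-(s : ℤ))) * ∑ i ∈ range s, mono i ((s : ℤ) - 1 - i)

lemma mono_mul (a b c d : ℤ) : mono a b * mono c d = mono (a + c) (b + d) := by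
  simp [mono, AddMonoidAlgebra.single_mul_single, Prod.mk_add_mk]

lemma mono_congr {a b c d : ℤ} (h1 : a = c) (h2 : b = d) : mono a b = mono c d := by
  rw [h1, h2]

lemma mono_one : mono 0 0 = 1 := rfl

lemma F_nat (w : ℕ) (hw : 1 ≤ w) : F (w : ℤ) = ∑ i ∈ range w, mono i i := by
  rw [F, if_pos (by exact_mod_cast hw : (0:ℤ) < (w:ℤ))]
  simp

lemma Dl_eq (s : ℕ) : Dl s = -∑ i ∈ range s, mono ((i:ℤ) - s) (-1 - i) := by
  rw [Dl, neg_mul, Finset.mul_sum, neg_inj]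
  refine Finset.sum_congr rfl fun i hi => ?_
  rw [mono_mul]; exact mono_congr (by ring) (by ring)

lemma key (T D D' S1 S2 : L2) (h1 : mono 1 1 * (T * D) = -S2 - D)
    (h2 : mono 1 0 * (T * D) + mono 0 1 * (T * D) - T * D' = -S1) :
    ((mono 1 0 - 1) * (mono 0 1 - 1) * T + 1) * D +
      mono (-1) (-1) * (-(mono 1 1) * T) * (D - D') = S1 - S2 := by
  have e1 : mono (-1) (-1) * mono 1 1 = 1 := by rw [mono_mul]; norm_num [mono_one]
  have e2 : mono 1 0 * mono 0 1 = mono 1 1 := by rw [mono_mul]; norm_num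
  linear_combination h1 - h2 - T*(D-D')*e1 + T*D*e2

/-- `Δ_n := ((u₁-1)(u₂-1)F_w + 1)·Δ_{n-1} + (u₁u₂)^{-1}·(F_w/F_{-1})·(Δ_{n-1} - Δ_{n-2})`
equals `Σ_{0≤i≤w-1, 0≤j≤n-1} u₁^{i+j+1-n} u₂^{i-j} − Σ_{0≤i≤w, 0≤j≤n-2} u₁^{i+j+1-n} u₂^{i-j-1}`,
where `F_{-1} = -(u₁u₂)^{-1}` is a unit so that `F_w/F_{-1} = -(u₁u₂)·F_w`. -/
theorem Delta_n_closed_form (w n : ℕ) (hw : 1 ≤ w) (hn : 2 ≤ n) :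
    ((mono 1 0 - 1) * (mono 0 1 - 1) * F (w : ℤ) + 1) * Dl (n - 1)
        + mono (-1) (-1) * (-(mono 1 1) * F (w : ℤ)) * (Dl (n - 1) - Dl (n - 2)) =
      (∑ i ∈ range w, ∑ j ∈ range n, mono ((i : ℤ) + j + 1 - n) ((i : ℤ) - j))
        - ∑ i ∈ range (w + 1), ∑ j ∈ range (n - 1),
            mono ((i : ℤ) + j + 1 - n) ((i : ℤ) - j - 1) := by
  obtain ⟨m, rfl⟩ : ∃ m, n = m + 2 := ⟨n - 2, by omega⟩
  show _ = _
  rw [show m + 2 - 1 = m + 1 from rfl, show m + 2 - 2 = m from rfl]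
  refine key (F (w:ℤ)) (Dl (m+1)) (Dl m) _ _ ?_ ?_
  · -- subgoal 1
    have lhs_eq : mono 1 1 * (F (w:ℤ) * Dl (m+1)) =
        -∑ i ∈ range w, ∑ k ∈ range (m+1), mono ((i:ℤ)+k-m) ((i:ℤ)-k) := by
      rw [F_nat w hw, Dl_eq]
      rw [mul_neg, mul_neg, neg_inj, Finset.sum_mul_sum, Finset.mul_sum]
      refine Finset.sum_congr rfl fun i _ => ?_
      rw [Finset.mul_sum]
      refine Finset.sum_congr rfl fun k _ => ?_
      rw [mono_mul, mono_mul]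
      exact mono_congr (by push_cast; ring) (by push_cast; ring)
    rw [lhs_eq, Dl_eq, Finset.sum_range_succ']
    have eA : ∑ k ∈ range w, ∑ j ∈ range (m+1), mono ((k:ℤ)+1+↑j+1-(↑m+2)) ((k:ℤ)+1-↑j-1)
        = ∑ i ∈ range w, ∑ k ∈ range (m+1), mono ((i:ℤ)+k-m) ((i:ℤ)-k) :=
      Finset.sum_congr rfl fun i _ => Finset.sum_congr rfl fun k _ =>
        mono_congr (by ring) (by ring)
    have eB : ∑ j ∈ range (m+1), mono ((0:ℤ)+↑j+1-(↑m+2)) ((0:ℤ)-↑j-1)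
        = ∑ i ∈ range (m+1), mono ((i:ℤ) - (↑m+1)) (-1 - ↑i) :=
      Finset.sum_congr rfl fun k _ => mono_congr (by ring) (by ring)
    push_cast
    linear_combination eA + eB
  · have hX : mono 1 0 * (F (w:ℤ) * Dl (m+1)) =
        -∑ i ∈ range w, ∑ k ∈ range (m+1), mono ((i:ℤ)+k-m) ((i:ℤ)-k-1) := by
      rw [F_nat w hw, Dl_eq]
      rw [mul_neg, mul_neg, neg_inj, Finset.sum_mul_sum, Finset.mul_sum]
      refine Finset.sum_congr rfl fun i _ => ?_
      rw [Finset.mul_sum]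
      refine Finset.sum_congr rfl fun k _ => ?_
      rw [mono_mul, mono_mul]
      exact mono_congr (by push_cast; ring) (by push_cast; ring)
    have hY : mono 0 1 * (F (w:ℤ) * Dl (m+1)) =
        -∑ i ∈ range w, ∑ k ∈ range (m+1), mono ((i:ℤ)+k-(↑m+1)) ((i:ℤ)-k) := by
      rw [F_nat w hw, Dl_eq]
      rw [mul_neg, mul_neg, neg_inj, Finset.sum_mul_sum, Finset.mul_sum]
      refine Finset.sum_congr rfl fun i _ => ?_
      rw [Finset.mul_sum]
      refine Finset.sum_congr rfl fun k _ => ?_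
      rw [mono_mul, mono_mul]
      exact mono_congr (by push_cast; ring) (by push_cast; ring)
    have hT : F (w:ℤ) * Dl m =
        -∑ i ∈ range w, ∑ k ∈ range m, mono ((i:ℤ)+k-m) ((i:ℤ)-k-1) := by
      rw [F_nat w hw, Dl_eq]
      rw [mul_neg, neg_inj, Finset.sum_mul_sum]
      refine Finset.sum_congr rfl fun i _ => Finset.sum_congr rfl fun k _ => ?_
      rw [mono_mul]
      exact mono_congr (by push_cast; ring) (by push_cast; ring)
    rw [hX, hY, hT]
    have e1 : ∑ i ∈ range w, ∑ j ∈ range (m+2), mono ((i:ℤ)+j+1-↑(m+2)) ((i:ℤ)-j) =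
        (∑ i ∈ range w, ∑ j ∈ range (m+1), mono ((i:ℤ)+j-m) ((i:ℤ)-j-1))
          + ∑ i ∈ range w, mono ((i:ℤ)-(↑m+1)) (i:ℤ) := by
      rw [← Finset.sum_add_distrib]
      refine Finset.sum_congr rfl fun i _ => ?_
      rw [Finset.sum_range_succ']
      exact congrArg₂ (· + ·)
        (Finset.sum_congr rfl fun k _ => mono_congr (by push_cast; ring) (by push_cast; ring))
        (mono_congr (by push_cast; ring) (by push_cast; ring))
    have e2 : ∑ i ∈ range w, ∑ k ∈ range (m+1), mono ((i:ℤ)+k-(↑m+1)) ((i:ℤ)-k) =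
        (∑ i ∈ range w, ∑ k ∈ range m, mono ((i:ℤ)+k-m) ((i:ℤ)-k-1))
          + ∑ i ∈ range w, mono ((i:ℤ)-(↑m+1)) (i:ℤ) := by
      rw [← Finset.sum_add_distrib]
      refine Finset.sum_congr rfl fun i _ => ?_
      rw [Finset.sum_range_succ']
      exact congrArg₂ (· + ·)
        (Finset.sum_congr rfl fun k _ => mono_congr (by push_cast; ring) (by push_cast; ring))
        (mono_congr (by push_cast; ring) (by push_cast; ring))
    linear_combination e1 - e2
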